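/- The algebra B'(λ,β) admits a solvable element of solvability index n for some n ≥ 3 if and only if (λ,β) ∈ P. -/

import Mathlib

/-- The multiplication of the generalized ABO-blood type algebra `B'(l, β)` on `ℝ⁴`,
with ordered basis `o = e₀`, `a = e₁`, `b = e₂`, `ab = e₃`, determined by bilinearity,
commutativity and: `o∘o = o`, `o∘a = l•a`, `o∘b = l•b`, `a∘a = a`, `b∘b = b`,
`a∘b = ((l-β)/l)•a + ((l+β-1)/l)•b + ab`, `o∘ab = a∘ab = b∘ab = ab∘ab = 0`. -/
noncomputable def Bmul (l β : ℝ) (x y : Fin 4 → ℝ) : Fin 4 → ℝ :=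
  ![x 0 * y 0,
    l * (x 0 * y 1 + x 1 * y 0) + x 1 * y 1 + (l - β) / l * (x 1 * y 2 + x 2 * y 1),
    l * (x 0 * y 2 + x 2 * y 0) + x 2 * y 2 + (l + β - 1) / l * (x 1 * y 2 + x 2 * y 1),
    x 1 * y 2 + x 2 * y 1]

/-- The basis vector `o`. -/
noncomputable def vo : Fin 4 → ℝ := ![1, 0, 0, 0]
/-- The basis vector `a`. -/
noncomputable def va : Fin 4 → ℝ := ![0, 1, 0, 0]
/-- The basis vector `b`. -/
noncomputable def vb : Fin 4 → ℝ := ![0, 0, 1, 0]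
/-- The basis vector `ab`. -/
noncomputable def vab : Fin 4 → ℝ := ![0, 0, 0, 1]

/-- The set `P` of parameters: `0 < l ≤ 1/3` and `β = (1 ± √((1-l)(1-3l)))/2`. -/
def memP (l β : ℝ) : Prop :=
  0 < l ∧ l ≤ 1 / 3 ∧
    (β = (1 + Real.sqrt ((1 - l) * (1 - 3 * l))) / 2 ∨
     β = (1 - Real.sqrt ((1 - l) * (1 - 3 * l))) / 2)

/-- `plen l β m k` is the `(k+1)`-st plenary power `m^[k+1]`:
`m^[1] = m` and `m^[k+1] = m^[k] ∘ m^[k]`. -/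
noncomputable def plen (l β : ℝ) (m : Fin 4 → ℝ) : ℕ → Fin 4 → ℝ
  | 0 => m
  | k + 1 => Bmul l β (plen l β m k) (plen l β m k)

/-- `m` is solvable of (exact) solvability index `n`: `m^[n] = 0` and `m^[k] ≠ 0`
for all `1 ≤ k < n`. -/
noncomputable def SolvableOfIndex (l β : ℝ) (m : Fin 4 → ℝ) (n : ℕ) : Prop :=
  plen l β m (n - 1) = 0 ∧ ∀ k, 1 ≤ k → k < n → plen l β m (k - 1) ≠ 0

lemma plen_zero_coord (l β : ℝ) (m : Fin 4 → ℝ) (k : ℕ) :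
    plen l β m k 0 = (m 0) ^ (2 ^ k) := by
  induction k with
  | zero => simp [plen]
  | succ k ih =>
    have : plen l β m (k + 1) 0 = plen l β m k 0 * plen l β m k 0 := by
      simp [plen, Bmul]
    rw [this, ih, pow_succ, pow_mul, sq]

lemma sq_special (l β : ℝ) (hl : l ≠ 0) (key : 4 * (l - β) * (l + β - 1) = l * l) :
    Bmul l β ![0, -2 * (l - β) / l, 1, 0] ![0, -2 * (l - β) / l, 1, 0]
      = ![0, 0, 0, 2 * (-2 * (l - β) / l)] := by
  funext i
  fin_cases i
  · simp [Bmul]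
  · simp [Bmul]; field_simp; ring
  · simp [Bmul]; field_simp; linear_combination -key
  · simp [Bmul]; ring

lemma sq_ab (l β t : ℝ) : Bmul l β ![0, 0, 0, t] ![0, 0, 0, t] = 0 := by
  funext i
  fin_cases i <;> simp [Bmul]

/-- `B'(l, β)` admits a solvable element of solvability index `n` for some `n ≥ 3`
if and only if `(l, β) ∈ P`. -/
theorem stmt_3 (l β : ℝ) (hl0 : 0 < l) (hl1 : l < 1) (hβ0 : 0 < β) (hβ1 : β < 1) :
    (∃ (m : Fin 4 → ℝ) (n : ℕ), 3 ≤ n ∧ SolvableOfIndex l β m n) ↔ memP l β := by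
  have hl : l ≠ 0 := hl0.ne'
  constructor
  · rintro ⟨m, n, hn3, hzero, hne⟩
    obtain ⟨j, rfl⟩ : ∃ j, n = j + 3 := ⟨n - 3, by omega⟩
    have hzero' : plen l β m (j + 2) = 0 := by
      have : j + 3 - 1 = j + 2 := by omega
      rwa [this] at hzero
    set p := plen l β m j with hp
    set q := Bmul l β p p with hqdef
    have hqeq : plen l β m (j + 1) = q := rfl
    have hr : Bmul l β q q = 0 := hzero'
    have hm0 : m 0 = 0 := by
      have h := plen_zero_coord l β m (j + 2)
      rw [hzero'] at h
      have h2 : (m 0) ^ (2 ^ (j + 2)) = 0 := by simpa using h.symm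
      exact pow_eq_zero_iff (by positivity) |>.mp h2
    have hp0 : p 0 = 0 := by
      rw [hp, plen_zero_coord, hm0, zero_pow (by positivity)]
    have hq0 : q 0 = 0 := by simp [hqdef, Bmul, hp0]
    have h3 := congrFun hr 3
    have h1 := congrFun hr 1
    have h2 := congrFun hr 2
    simp only [Bmul, Matrix.cons_val_zero, Matrix.cons_val_one, Matrix.head_cons,
      Matrix.cons_val_two, Matrix.tail_cons, Matrix.cons_val_three, Pi.zero_apply] at h3 h1 h2
    have hq1 : q 1 = 0 := by
      have : q 1 * q 1 = 0 := by
        linear_combination h1 - ((l - β) / l) * h3 - (2 * l * q 1) * hq0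
      exact mul_self_eq_zero.mp this
    have hq2 : q 2 = 0 := by
      have : q 2 * q 2 = 0 := by
        linear_combination h2 - ((l + β - 1) / l) * h3 - (2 * l * q 2) * hq0
      exact mul_self_eq_zero.mp this
    have hqne : q ≠ 0 := by
      have := hne (j + 2) (by omega) (by omega)
      have heq : j + 2 - 1 = j + 1 := by omega
      rw [heq, hqeq] at this
      exact this
    have hq3 : q 3 ≠ 0 := by
      intro h
      apply hqne
      funext i
      fin_cases i <;> simp_all
    have hp12 : p 1 * p 2 ≠ 0 := by
      intro h
      apply hq3
      have : q 3 = p 1 * p 2 + p 2 * p 1 := by simp [hqdef, Bmul]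
      rw [this]; linarith [h]
    have hp1 : p 1 ≠ 0 := fun h => hp12 (by rw [h]; ring)
    have hp2 : p 2 ≠ 0 := fun h => hp12 (by rw [h]; ring)
    have e1 : l * (p 0 * p 1 + p 1 * p 0) + p 1 * p 1
        + (l - β) / l * (p 1 * p 2 + p 2 * p 1) = 0 := by
      have : q 1 = l * (p 0 * p 1 + p 1 * p 0) + p 1 * p 1
          + (l - β) / l * (p 1 * p 2 + p 2 * p 1) := by
        simp [hqdef, Bmul]
      rw [← this, hq1]
    have e2 : l * (p 0 * p 2 + p 2 * p 0) + p 2 * p 2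
        + (l + β - 1) / l * (p 1 * p 2 + p 2 * p 1) = 0 := by
      have : q 2 = l * (p 0 * p 2 + p 2 * p 0) + p 2 * p 2
          + (l + β - 1) / l * (p 1 * p 2 + p 2 * p 1) := by
        simp [hqdef, Bmul]
      rw [← this, hq2]
    rw [hp0] at e1 e2
    have e1' : p 1 * (l * p 1 + 2 * (l - β) * p 2) = 0 := by
      have h := e1
      field_simp at h
      linear_combination h
    have e2' : p 2 * (l * p 2 + 2 * (l + β - 1) * p 1) = 0 := by
      have h := e2
      field_simp at h
      linear_combination h
    have f1 : l * p 1 + 2 * (l - β) * p 2 = 0 :=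
      (mul_eq_zero.mp e1').resolve_left hp1
    have f2 : l * p 2 + 2 * (l + β - 1) * p 1 = 0 :=
      (mul_eq_zero.mp e2').resolve_left hp2
    have key0 : (l * l - 4 * (l - β) * (l + β - 1)) * (p 1 * p 2) = 0 := by
      linear_combination (l * p 2) * f1 - (2 * (l - β) * p 2) * f2
    have key : 4 * (l - β) * (l + β - 1) = l * l := by
      rcases mul_eq_zero.mp key0 with h | h
      · linarith
      · exact absurd h hp12
    refine ⟨hl0, ?_, ?_⟩
    · nlinarith [sq_nonneg (2 * β - 1)]
    · set s := Real.sqrt ((1 - l) * (1 - 3 * l)) with hs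
      have hnn : (0:ℝ) ≤ (1 - l) * (1 - 3 * l) := by nlinarith [sq_nonneg (2 * β - 1)]
      have hs2 : s ^ 2 = (1 - l) * (1 - 3 * l) := Real.sq_sqrt hnn
      have hfac : (2 * β - 1 - s) * (2 * β - 1 + s) = 0 := by
        linear_combination -key - hs2
      rcases mul_eq_zero.mp hfac with h | h
      · exact Or.inl (by linarith)
      · exact Or.inr (by linarith)
  · rintro ⟨-, hl13, hβeq⟩
    have hnn : (0:ℝ) ≤ (1 - l) * (1 - 3 * l) :=
      mul_nonneg (by linarith) (by linarith)
    have hs2 : Real.sqrt ((1 - l) * (1 - 3 * l)) ^ 2 = (1 - l) * (1 - 3 * l) :=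
      Real.sq_sqrt hnn
    have key : 4 * (l - β) * (l + β - 1) = l * l := by
      rcases hβeq with h | h <;> subst h <;> linear_combination -hs2
    have hlβ : l - β ≠ 0 := by
      intro h
      rw [h] at key
      nlinarith
    have hxne : -2 * (l - β) / l ≠ 0 :=
      div_ne_zero (by intro h; apply hlβ; linarith) hl
    have step1 : plen l β ![0, -2 * (l - β) / l, 1, 0] 1 = ![0, 0, 0, 2 * (-2 * (l - β) / l)] := by
      have h : plen l β ![0, -2 * (l - β) / l, 1, 0] 1
          = Bmul l β ![0, -2 * (l - β) / l, 1, 0] ![0, -2 * (l - β) / l, 1, 0] := rfl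
      rw [h, sq_special l β hl key]
    refine ⟨![0, -2 * (l - β) / l, 1, 0], 3, le_refl 3, ?_, ?_⟩
    · show plen l β ![0, -2 * (l - β) / l, 1, 0] 2 = 0
      have h : plen l β ![0, -2 * (l - β) / l, 1, 0] 2
          = Bmul l β (plen l β ![0, -2 * (l - β) / l, 1, 0] 1)
              (plen l β ![0, -2 * (l - β) / l, 1, 0] 1) := rfl
      rw [h, step1, sq_ab]
    · intro k hk1 hk3
      interval_cases k
      · show plen l β ![0, -2 * (l - β) / l, 1, 0] 0 ≠ 0
        intro h
        have := congrFun h 2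
        simp [plen] at this
      · show plen l β ![0, -2 * (l - β) / l, 1, 0] 1 ≠ 0
        intro h
        rw [step1] at h
        have h3 := congrFun h 3
        simp at h3
        exact h3.elim hlβ hl
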